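/- For every t > 0, every time-labelled ternary tree T compatible with horizon t, and all z₁ ≤ z₂ in ℝ, one has P^t_{z₁}(T) ≤ P^t_{z₂}(T). -/

import Mathlib

open MeasureTheory

/-- Density of the normal distribution `N(m, v)` (`v` the variance). -/
noncomputable def gauss (m v x : ℝ) : ℝ :=
  (Real.sqrt (2 * Real.pi * v))⁻¹ * Real.exp (-(x - m) ^ 2 / (2 * v))

/-- The majority-vote probability for three independent Bernoulli votes
with success probabilities `p₁, p₂, p₃`. -/
noncomputable def g3 (p₁ p₂ p₃ : ℝ) : ℝ :=
  p₁ * p₂ * p₃ + p₁ * p₂ * (1 - p₃) + p₂ * p₃ * (1 - p₁) + p₃ * p₁ * (1 - p₂)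

/-- A time-labelled ternary tree: either a leaf, or a branch node carrying a
waiting time `τ` and three subtrees. -/
inductive TTree where
  | leaf : TTree
  | node (τ : ℝ) (T₁ T₂ T₃ : TTree) : TTree

/-- `T.compat t`: all waiting times are positive and along every root-to-leaf path
the waiting times sum to strictly less than the horizon `t` (in particular `t > 0`). -/
def TTree.compat : TTree → ℝ → Prop
  | .leaf, t => 0 < t
  | .node τ T₁ T₂ T₃, t =>
      0 < τ ∧ τ < t ∧ T₁.compat (t - τ) ∧ T₂.compat (t - τ) ∧ T₃.compat (t - τ)

/-- The voting probability `P^t_z(T)`: recursively, a leaf contributes the probability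
that a rate-2 Brownian motion started at `z` is `≥ 0` at time `t`, and a branch node
averages the majority vote of its three subtrees over the position at the branch time. -/
noncomputable def voteP : TTree → ℝ → ℝ → ℝ
  | .leaf, t, z => ∫ y in Set.Ioi (0 : ℝ), gauss z (2 * t) y
  | .node τ T₁ T₂ T₃, t, z =>
      ∫ y : ℝ, g3 (voteP T₁ (t - τ) y) (voteP T₂ (t - τ) y) (voteP T₃ (t - τ) y)
        * gauss z (2 * τ) y



lemma gauss_eq_pdf (m : ℝ) {v : ℝ} (hv : 0 < v) (x : ℝ) :
    gauss m v x = ProbabilityTheory.gaussianPDFReal m v.toNNReal x := by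
  simp [gauss, ProbabilityTheory.gaussianPDFReal, Real.coe_toNNReal v hv.le]

lemma gauss_nonneg (m v x : ℝ) : 0 ≤ gauss m v x := by
  unfold gauss; positivity

lemma gauss_integrable (m : ℝ) {v : ℝ} (hv : 0 < v) : Integrable (gauss m v) := by
  have := ProbabilityTheory.integrable_gaussianPDFReal m v.toNNReal
  refine this.congr ?_
  exact Filter.Eventually.of_forall fun x => (gauss_eq_pdf m hv x).symm

lemma gauss_integral (m : ℝ) {v : ℝ} (hv : 0 < v) : ∫ x, gauss m v x = 1 := by
  have hne : v.toNNReal ≠ 0 := by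
    simp [Real.toNNReal_eq_zero]; linarith
  rw [show (fun x => gauss m v x) = ProbabilityTheory.gaussianPDFReal m v.toNNReal from
    funext fun x => gauss_eq_pdf m hv x]
  exact ProbabilityTheory.integral_gaussianPDFReal_eq_one m hne

lemma gauss_shift (z v y : ℝ) : gauss z v y = gauss 0 v (y - z) := by
  simp [gauss]

lemma gauss_measurable (m v : ℝ) : Measurable (gauss m v) := by
  unfold gauss; fun_prop

-- integrability of F * gauss for bounded measurable F
lemma Fg_integrable {F : ℝ → ℝ} (hFm : Measurable F) (h0 : ∀ y, 0 ≤ F y)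
    (h1 : ∀ y, F y ≤ 1) (m : ℝ) {v : ℝ} (hv : 0 < v) :
    Integrable (fun y => F y * gauss m v y) :=
  (gauss_integrable m hv).bdd_mul hFm.aestronglyMeasurable
    (c := 1) (Filter.Eventually.of_forall fun y => by rw [Real.norm_eq_abs, abs_of_nonneg (h0 y)]; exact h1 y)

lemma integral_Fg_mem {F : ℝ → ℝ} (hFm : Measurable F) (h0 : ∀ y, 0 ≤ F y)
    (h1 : ∀ y, F y ≤ 1) (m : ℝ) {v : ℝ} (hv : 0 < v) :
    (∫ y, F y * gauss m v y) ∈ Set.Icc (0:ℝ) 1 := by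
  constructor
  · exact integral_nonneg fun y => mul_nonneg (h0 y) (gauss_nonneg m v y)
  · have h2 : (∫ y, F y * gauss m v y) ≤ ∫ y, gauss m v y := by
      refine integral_mono (Fg_integrable hFm h0 h1 m hv) (gauss_integrable m hv) fun y => ?_
      have := mul_le_mul_of_nonneg_right (h1 y) (gauss_nonneg m v y)
      simpa using this
    rw [gauss_integral m hv] at h2
    exact h2

lemma integral_Fg_mono {F : ℝ → ℝ} (hF : Monotone F) (h0 : ∀ y, 0 ≤ F y)
    (h1 : ∀ y, F y ≤ 1) {v : ℝ} (hv : 0 < v) :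
    Monotone (fun z => ∫ y, F y * gauss z v y) := by
  have hFm : Measurable F := hF.measurable
  have key : ∀ z : ℝ, (∫ y, F y * gauss z v y) = ∫ u, F (u + z) * gauss 0 v u := by
    intro z
    have := integral_add_right_eq_self (μ := volume) (fun y => F y * gauss 0 v (y - z)) z
    simp only [add_sub_cancel_right] at this
    simp_rw [gauss_shift z v]
    rw [← this]
  intro z₁ z₂ hz
  simp only
  rw [key z₁, key z₂]
  refine integral_mono ?_ ?_ fun u => ?_
  · exact Fg_integrable (hFm.comp (by fun_prop)) (fun y => h0 _) (fun y => h1 _) 0 hv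
  · exact Fg_integrable (hFm.comp (by fun_prop)) (fun y => h0 _) (fun y => h1 _) 0 hv
  · exact mul_le_mul_of_nonneg_right (hF (by linarith)) (gauss_nonneg 0 v u)


lemma g3_nonneg {p₁ p₂ p₃ : ℝ} (h₁ : p₁ ∈ Set.Icc (0:ℝ) 1) (h₂ : p₂ ∈ Set.Icc (0:ℝ) 1)
    (h₃ : p₃ ∈ Set.Icc (0:ℝ) 1) : 0 ≤ g3 p₁ p₂ p₃ := by
  obtain ⟨a1,b1⟩ := h₁; obtain ⟨a2,b2⟩ := h₂; obtain ⟨a3,b3⟩ := h₃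
  unfold g3
  nlinarith [mul_nonneg (mul_nonneg a1 a2) a3, mul_nonneg (mul_nonneg a1 a2) (by linarith : (0:ℝ) ≤ 1 - p₃),
    mul_nonneg (mul_nonneg a2 a3) (by linarith : (0:ℝ) ≤ 1 - p₁),
    mul_nonneg (mul_nonneg a3 a1) (by linarith : (0:ℝ) ≤ 1 - p₂)]

lemma g3_le_one {p₁ p₂ p₃ : ℝ} (h₁ : p₁ ∈ Set.Icc (0:ℝ) 1) (h₂ : p₂ ∈ Set.Icc (0:ℝ) 1)
    (h₃ : p₃ ∈ Set.Icc (0:ℝ) 1) : g3 p₁ p₂ p₃ ≤ 1 := by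
  obtain ⟨a1,b1⟩ := h₁; obtain ⟨a2,b2⟩ := h₂; obtain ⟨a3,b3⟩ := h₃
  unfold g3
  nlinarith [mul_nonneg (mul_nonneg (by linarith : (0:ℝ) ≤ 1-p₁) (by linarith : (0:ℝ) ≤ 1-p₂)) (by linarith : (0:ℝ) ≤ 1-p₃),
    mul_nonneg (mul_nonneg a1 (by linarith : (0:ℝ) ≤ 1-p₂)) (by linarith : (0:ℝ) ≤ 1-p₃),
    mul_nonneg (mul_nonneg a2 (by linarith : (0:ℝ) ≤ 1-p₁)) (by linarith : (0:ℝ) ≤ 1-p₃),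
    mul_nonneg (mul_nonneg a3 (by linarith : (0:ℝ) ≤ 1-p₁)) (by linarith : (0:ℝ) ≤ 1-p₂)]

lemma g3_mono {p₁ p₂ p₃ q₁ q₂ q₃ : ℝ}
    (h₁ : p₁ ∈ Set.Icc (0:ℝ) 1) (h₂ : p₂ ∈ Set.Icc (0:ℝ) 1) (h₃ : p₃ ∈ Set.Icc (0:ℝ) 1)
    (k₁ : q₁ ∈ Set.Icc (0:ℝ) 1) (k₂ : q₂ ∈ Set.Icc (0:ℝ) 1) (k₃ : q₃ ∈ Set.Icc (0:ℝ) 1)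
    (e₁ : p₁ ≤ q₁) (e₂ : p₂ ≤ q₂) (e₃ : p₃ ≤ q₃) :
    g3 p₁ p₂ p₃ ≤ g3 q₁ q₂ q₃ := by
  obtain ⟨a1,b1⟩ := h₁; obtain ⟨a2,b2⟩ := h₂; obtain ⟨a3,b3⟩ := h₃
  obtain ⟨c1,d1⟩ := k₁; obtain ⟨c2,d2⟩ := k₂; obtain ⟨c3,d3⟩ := k₃
  have s1 : g3 p₁ p₂ p₃ ≤ g3 q₁ p₂ p₃ := by
    unfold g3
    nlinarith [mul_nonneg (sub_nonneg.2 e₁) (mul_nonneg a2 (by linarith : (0:ℝ) ≤ 1-p₃)),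
      mul_nonneg (sub_nonneg.2 e₁) (mul_nonneg a3 (by linarith : (0:ℝ) ≤ 1-p₂))]
  have s2 : g3 q₁ p₂ p₃ ≤ g3 q₁ q₂ p₃ := by
    unfold g3
    nlinarith [mul_nonneg (sub_nonneg.2 e₂) (mul_nonneg c1 (by linarith : (0:ℝ) ≤ 1-p₃)),
      mul_nonneg (sub_nonneg.2 e₂) (mul_nonneg a3 (by linarith : (0:ℝ) ≤ 1-q₁))]
  have s3 : g3 q₁ q₂ p₃ ≤ g3 q₁ q₂ q₃ := by
    unfold g3
    nlinarith [mul_nonneg (sub_nonneg.2 e₃) (mul_nonneg c1 (by linarith : (0:ℝ) ≤ 1-q₂)),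
      mul_nonneg (sub_nonneg.2 e₃) (mul_nonneg c2 (by linarith : (0:ℝ) ≤ 1-q₁))]
  linarith

lemma g3_measurable {f₁ f₂ f₃ : ℝ → ℝ} (h₁ : Measurable f₁) (h₂ : Measurable f₂)
    (h₃ : Measurable f₃) : Measurable fun y => g3 (f₁ y) (f₂ y) (f₃ y) := by
  unfold g3; fun_prop

lemma voteP_mem_mono : ∀ (T : TTree) (t : ℝ), T.compat t →
    (∀ z, voteP T t z ∈ Set.Icc (0:ℝ) 1) ∧ Monotone (fun z => voteP T t z) := by
  intro T
  induction T with
  | leaf =>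
    intro t ht
    have ht' : 0 < t := ht
    have hv : (0:ℝ) < 2 * t := by linarith
    set ind : ℝ → ℝ := (Set.Ioi (0:ℝ)).indicator (fun _ => (1:ℝ)) with hind
    have hind0 : ∀ y, 0 ≤ ind y := fun y => Set.indicator_nonneg (fun _ _ => zero_le_one) y
    have hind1 : ∀ y, ind y ≤ 1 := fun y => by
      by_cases h : y ∈ Set.Ioi (0:ℝ) <;> simp [hind, Set.indicator_apply, h]
    have hmono : Monotone ind := by
      intro a b hab
      by_cases ha : a ∈ Set.Ioi (0:ℝ)
      · have hb : b ∈ Set.Ioi (0:ℝ) := lt_of_lt_of_le ha hab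
        simp [hind, Set.indicator_apply, ha, hb]
      · have : ind a = 0 := by simp [hind, Set.indicator_apply, ha]
        rw [this]; exact hind0 b
    have hrep : ∀ z, voteP .leaf t z = ∫ y, ind y * gauss z (2 * t) y := by
      intro z
      show (∫ y in Set.Ioi (0:ℝ), gauss z (2 * t) y) = _
      rw [← integral_indicator measurableSet_Ioi]
      congr 1; ext y
      by_cases h : y ∈ Set.Ioi (0:ℝ) <;> simp [hind, Set.indicator_apply, h]
    constructor
    · intro z; rw [hrep z]
      exact integral_Fg_mem hmono.measurable hind0 hind1 z hv
    · intro z₁ z₂ hz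
      simp only [hrep]
      exact integral_Fg_mono hmono hind0 hind1 hv hz
  | node τ T₁ T₂ T₃ ih₁ ih₂ ih₃ =>
    rintro t ⟨hτ, hτt, hc1, hc2, hc3⟩
    have hv : (0:ℝ) < 2 * τ := by linarith
    obtain ⟨m1, o1⟩ := ih₁ (t - τ) hc1
    obtain ⟨m2, o2⟩ := ih₂ (t - τ) hc2
    obtain ⟨m3, o3⟩ := ih₃ (t - τ) hc3
    set F : ℝ → ℝ := fun y =>
      g3 (voteP T₁ (t - τ) y) (voteP T₂ (t - τ) y) (voteP T₃ (t - τ) y) with hF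
    have hF0 : ∀ y, 0 ≤ F y := fun y => g3_nonneg (m1 y) (m2 y) (m3 y)
    have hF1 : ∀ y, F y ≤ 1 := fun y => g3_le_one (m1 y) (m2 y) (m3 y)
    have hFmono : Monotone F := fun a b hab =>
      g3_mono (m1 a) (m2 a) (m3 a) (m1 b) (m2 b) (m3 b) (o1 hab) (o2 hab) (o3 hab)
    have hrep : ∀ z, voteP (.node τ T₁ T₂ T₃) t z = ∫ y, F y * gauss z (2 * τ) y := by
      intro z; rfl
    constructor
    · intro z; rw [hrep z]
      exact integral_Fg_mem hFmono.measurable hF0 hF1 z hv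
    · intro z₁ z₂ hz
      simp only [hrep]
      exact integral_Fg_mono hFmono hF0 hF1 hv hz

theorem voteP_monotone (t : ℝ) (ht : 0 < t) (T : TTree) (hT : T.compat t)
    (z₁ z₂ : ℝ) (hz : z₁ ≤ z₂) :
    voteP T t z₁ ≤ voteP T t z₂ := (voteP_mem_mono T t hT).2 hz
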